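/- Let δ be an m×r binary matrix with unordered GLT structure (pairwise distinct pivot rows) that satisfies the counting rule CR(r,s), and let N be the number of ones in δ. Parametrize the matrices with sparsity pattern δ by vectors x ∈ ℝ^N, where Λ(x) is the m×r matrix whose entries at the positions of ones of δ are the coordinates of x and whose other entries are zero. Then the set of x ∈ ℝ^N for which Λ(x) violates the extended row deletion property RD(r,s) has Lebesgue measure zero; consequently RD(r,s) holds for all Λ̃ ∈ Θ_δ except for a set of measure zero. -/

import Mathlib

open Matrix

open Classical in
/-- The counting rule `CR(r,s)`: every submatrix formed by a nonempty set `S` of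
columns has at least `2 * |S| + s` nonzero rows. -/
def CR {I : Type*} [Fintype I] {r : ℕ} (δ : Matrix I (Fin r) Bool) (s : ℕ) : Prop :=
  ∀ S : Finset (Fin r), S.Nonempty →
    2 * S.card + s ≤ (Finset.univ.filter fun i : I => ∃ j ∈ S, δ i j = true).card

/-- The extended row deletion property `RD(r,s)`: whenever any `s` rows are
deleted, the remaining rows contain two disjoint submatrices of rank `r`. -/
def RD {m r : ℕ} (Λ : Matrix (Fin m) (Fin r) ℝ) (s : ℕ) : Prop :=
  ∀ D : Finset (Fin m), D.card = s →
    ∃ A B : Finset (Fin m), Disjoint A B ∧ Disjoint A D ∧ Disjoint B D ∧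
      (Λ.submatrix (fun i : {i : Fin m // i ∈ A} => (i : Fin m)) id).rank = r ∧
      (Λ.submatrix (fun i : {i : Fin m // i ∈ B} => (i : Fin m)) id).rank = r

/-- A binary matrix with unordered GLT structure: pairwise distinct pivot rows. -/
def IsGLTBool {m r : ℕ} (δ : Matrix (Fin m) (Fin r) Bool) : Prop :=
  ∃ l : Fin r → Fin m, Function.Injective l ∧
    ∀ j : Fin r, δ (l j) j = true ∧ ∀ i : Fin m, i < l j → δ i j = false

/-- The matrix with sparsity pattern `δ` whose entries at the positions of the
ones of `δ` are the coordinates of the parameter vector `x`. -/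
def matrixOfPattern {m r : ℕ} (δ : Matrix (Fin m) (Fin r) Bool)
    (x : {p : Fin m × Fin r // δ p.1 p.2 = true} → ℝ) : Matrix (Fin m) (Fin r) ℝ :=
  Matrix.of fun i j => if h : δ i j = true then x ⟨(i, j), h⟩ else 0

open MeasureTheory

lemma measurable_mvpoly_eval {ι : Type*} (p : MvPolynomial ι ℝ) :
    Measurable fun x : ι → ℝ => MvPolynomial.eval x p := by
  induction p using MvPolynomial.induction_on with
  | C a => simpa using measurable_const
  | add p q hp hq => simp only [map_add]; exact hp.add hq
  | mul_X p n hp => simp only [map_mul, MvPolynomial.eval_X]; exact hp.mul (measurable_pi_apply n)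

lemma mv_null_fin : ∀ (n : ℕ) (p : MvPolynomial (Fin n) ℝ), p ≠ 0 →
    volume {x : Fin n → ℝ | MvPolynomial.eval x p = 0} = 0 := by
  intro n
  induction n with
  | zero =>
    intro p hp
    obtain ⟨c, rfl⟩ := MvPolynomial.C_surjective (Fin 0) p
    have hc : c ≠ 0 := fun h => hp (by simp [h])
    have : {x : Fin 0 → ℝ | MvPolynomial.eval x (MvPolynomial.C c) = 0} = ∅ := by
      ext x; simp [hc]
    rw [show {x : Fin 0 → ℝ | MvPolynomial.eval x (MvPolynomial.C c) = 0} = ∅ from this, measure_empty]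
  | succ n ih =>
    intro p hp
    set q := MvPolynomial.finSuccEquiv ℝ n p with hqdef
    have hq : q ≠ 0 := by
      intro h
      exact hp ((MvPolynomial.finSuccEquiv ℝ n).injective (by rw [map_zero]; exact h))
    set S := {x : Fin (n+1) → ℝ | MvPolynomial.eval x p = 0} with hS
    have hSm : MeasurableSet S := (measurable_mvpoly_eval p) (measurableSet_singleton 0)
    set Φ : (Fin n → ℝ) × ℝ → (Fin (n+1) → ℝ) :=
      fun yt => (MeasurableEquiv.piFinSuccAbove (fun _ => ℝ) 0).symm (yt.2, yt.1) with hΦ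
    have hΦmp : MeasurePreserving Φ (volume.prod volume) volume := by
      have h1 := (volume_preserving_piFinSuccAbove (fun _ : Fin (n+1) => ℝ) 0).symm
      exact h1.comp Measure.measurePreserving_swap
    have hΦeq : ∀ y t, Φ (y, t) = Fin.cons t y := by
      intro y t
      simp [hΦ, MeasurableEquiv.piFinSuccAbove, Fin.consEquiv]
    have key : volume S = (volume.prod volume) (Φ ⁻¹' S) := by
      rw [hΦmp.measure_preimage hSm.nullMeasurableSet]
    rw [key]
    rw [Measure.measure_prod_null (hΦmp.measurable hSm)]
    have hc : q.leadingCoeff ≠ 0 := Polynomial.leadingCoeff_ne_zero.mpr hq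
    have hnull := ih q.leadingCoeff hc
    have hae : ∀ᵐ y : Fin n → ℝ, MvPolynomial.eval y q.leadingCoeff ≠ 0 := by
      rw [ae_iff]
      simpa using hnull
    filter_upwards [hae] with y hy
    have hmap : q.map (MvPolynomial.eval y) ≠ 0 := by
      intro h
      apply hy
      rw [Polynomial.leadingCoeff]
      have h2 := Polynomial.coeff_map (MvPolynomial.eval y) q.natDegree (p := q)
      rw [h] at h2
      simpa using h2.symm
    have hslice : Prod.mk y ⁻¹' (Φ ⁻¹' S) ⊆ {t : ℝ | (q.map (MvPolynomial.eval y)).IsRoot t} := by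
      intro t ht
      simp only [Set.mem_preimage, hΦeq, hS, Set.mem_setOf_eq] at ht
      simpa [Polynomial.IsRoot, hqdef] using
        (MvPolynomial.eval_eq_eval_mv_eval' y t p).symm.trans ht
    exact measure_mono_null hslice ((Polynomial.finite_setOf_isRoot hmap).measure_zero _)

lemma mv_null {ι : Type*} [Fintype ι] (p : MvPolynomial ι ℝ) (hp : p ≠ 0) :
    volume {x : ι → ℝ | MvPolynomial.eval x p = 0} = 0 := by
  set n := Fintype.card ι
  set f : Fin n ≃ ι := (Fintype.equivFin ι).symm
  set q := MvPolynomial.rename f.symm p with hqdef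
  have hq : q ≠ 0 := by
    intro h
    exact hp ((MvPolynomial.rename_injective _ f.symm.injective) (by simpa using h))
  have hSm : MeasurableSet {x : ι → ℝ | MvPolynomial.eval x p = 0} :=
    (measurable_mvpoly_eval p) (measurableSet_singleton 0)
  set T := MeasurableEquiv.piCongrLeft (fun _ : ι => ℝ) f with hT
  have hTmp : MeasurePreserving T volume volume :=
    volume_measurePreserving_piCongrLeft (fun _ => ℝ) f
  have key : volume {x : ι → ℝ | MvPolynomial.eval x p = 0}
      = volume (T ⁻¹' {x : ι → ℝ | MvPolynomial.eval x p = 0}) :=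
    (hTmp.measure_preimage hSm.nullMeasurableSet).symm
  rw [key]
  have hpre : T ⁻¹' {x : ι → ℝ | MvPolynomial.eval x p = 0}
      ⊆ {y : Fin n → ℝ | MvPolynomial.eval y q = 0} := by
    intro y hy
    simp only [Set.mem_preimage, Set.mem_setOf_eq] at hy ⊢
    rw [hqdef, MvPolynomial.eval_rename]
    have : (y ∘ f.symm) = T y := by
      funext i
      have := Equiv.piCongrLeft_apply_apply (fun _ : ι => ℝ) f y (f.symm i)
      simp only [Equiv.apply_symm_apply] at this
      simp [hT, MeasurableEquiv.piCongrLeft, this]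
    rw [this]; exact hy
  exact measure_mono_null hpre (mv_null_fin n q hq)

/-- rank of the submatrix on the image of an injective row selection with
nonvanishing determinant is full. -/
lemma rank_aux {m r : ℕ} (Λ : Matrix (Fin m) (Fin r) ℝ) (g : Fin r → Fin m)
    (A : Finset (Fin m)) (hA : A = Finset.univ.image g)
    (hdet : (Λ.submatrix g id).det ≠ 0) :
    (Λ.submatrix (fun i : {i : Fin m // i ∈ A} => (i : Fin m)) id).rank = r := by
  classical
  subst hA
  have hMrank : (Λ.submatrix g id).rank = r := by
    have hu : IsUnit (Λ.submatrix g id) :=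
      (Matrix.isUnit_iff_isUnit_det _).2 (isUnit_iff_ne_zero.2 hdet)
    simpa using Matrix.rank_of_isUnit _ hu
  have hrange : Set.range (Λ.submatrix
        (fun i : {i : Fin m // i ∈ Finset.univ.image g} => (i : Fin m)) id)
      = Set.range (Λ.submatrix g id) := by
    ext v
    constructor
    · rintro ⟨⟨i, hi⟩, rfl⟩
      obtain ⟨j, -, rfl⟩ := Finset.mem_image.1 hi
      exact ⟨j, rfl⟩
    · rintro ⟨j, rfl⟩
      exact ⟨⟨g j, Finset.mem_image_of_mem g (Finset.mem_univ j)⟩, rfl⟩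
  rw [Matrix.rank_eq_finrank_span_row, show Set.range (Λ.submatrix
        (fun i : {i : Fin m // i ∈ Finset.univ.image g} => (i : Fin m)) id).row
      = Set.range (Λ.submatrix g id).row from hrange, ← Matrix.rank_eq_finrank_span_row, hMrank]

noncomputable def Xmat {m r : ℕ} (δ : Matrix (Fin m) (Fin r) Bool) (g : Fin r → Fin m) :
    Matrix (Fin r) (Fin r) (MvPolynomial {p : Fin m × Fin r // δ p.1 p.2 = true} ℝ) :=
  Matrix.of fun j k => if h : δ (g j) k = true then MvPolynomial.X ⟨(g j, k), h⟩ else 0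

lemma Xmat_map {m r : ℕ} (δ : Matrix (Fin m) (Fin r) Bool) (g : Fin r → Fin m)
    (x : {p : Fin m × Fin r // δ p.1 p.2 = true} → ℝ) :
    (Xmat δ g).map (MvPolynomial.eval x) = (matrixOfPattern δ x).submatrix g id := by
  ext j k
  by_cases h : δ (g j) k = true <;> simp [Xmat, matrixOfPattern, h]

lemma Xmat_det_ne_zero {m r : ℕ} (δ : Matrix (Fin m) (Fin r) Bool) (g : Fin r → Fin m)
    (hg : Function.Injective g) (hδ : ∀ j, δ (g j) j = true) :
    (Xmat δ g).det ≠ 0 := by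
  intro h
  set x0 : {p : Fin m × Fin r // δ p.1 p.2 = true} → ℝ :=
    fun p => if p.1.1 = g p.1.2 then 1 else 0 with hx0
  have h1 : MvPolynomial.eval x0 (Xmat δ g).det = 0 := by rw [h]; simp
  rw [RingHom.map_det, RingHom.mapMatrix_apply] at h1
  have h2 : (Xmat δ g).map (MvPolynomial.eval x0) = 1 := by
    ext j k
    by_cases hjk : j = k
    · subst hjk
      simp [Xmat, hδ j, hx0, Matrix.one_apply]
    · by_cases hd : δ (g j) k = true
      · have hne : ¬ g j = g k := fun hh => hjk (hg hh)
        simp [Xmat, hd, hx0, hne, Matrix.one_apply, hjk]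
      · simp [Xmat, hd, Matrix.one_apply, hjk]
  rw [h2, Matrix.det_one] at h1
  exact one_ne_zero h1

theorem CR_implies_RD_ae {m r s : ℕ}
    (δ : Matrix (Fin m) (Fin r) Bool) (hglt : IsGLTBool δ) (hcr : CR δ s) :
    MeasureTheory.volume
      {x : {p : Fin m × Fin r // δ p.1 p.2 = true} → ℝ |
        ¬ RD (matrixOfPattern δ x) s} = 0 := by
  classical
  have key : ∀ D : Finset (Fin m), D.card = s →
      volume {x : {p : Fin m × Fin r // δ p.1 p.2 = true} → ℝ |
        ¬ ∃ A B : Finset (Fin m), Disjoint A B ∧ Disjoint A D ∧ Disjoint B D ∧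
          ((matrixOfPattern δ x).submatrix
            (fun i : {i : Fin m // i ∈ A} => (i : Fin m)) id).rank = r ∧
          ((matrixOfPattern δ x).submatrix
            (fun i : {i : Fin m // i ∈ B} => (i : Fin m)) id).rank = r} = 0 := by
    intro D hD
    set t : Fin r × Fin 2 → Finset (Fin m) :=
      fun jk => Finset.univ.filter (fun i => δ i jk.1 = true ∧ i ∉ D) with ht
    have hall : ∀ s' : Finset (Fin r × Fin 2), s'.card ≤ (s'.biUnion t).card := by
      intro s'
      rcases s'.eq_empty_or_nonempty with rfl | hs'
      · simp
      · set S := s'.image Prod.fst with hSdef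
        have hSne : S.Nonempty := hs'.image _
        have h1 : s'.card ≤ 2 * S.card := by
          have hsub : s' ⊆ S ×ˢ Finset.univ := by
            intro jk hjk
            exact Finset.mem_product.2 ⟨Finset.mem_image_of_mem _ hjk, Finset.mem_univ _⟩
          calc s'.card ≤ (S ×ˢ (Finset.univ : Finset (Fin 2))).card :=
                Finset.card_le_card hsub
            _ = 2 * S.card := by simp [Finset.card_product, mul_comm]
        have h2 : (Finset.univ.filter fun i : Fin m => ∃ j ∈ S, δ i j = true) \ D
            ⊆ s'.biUnion t := by
          intro i hi
          rw [Finset.mem_sdiff, Finset.mem_filter] at hi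
          obtain ⟨⟨-, j, hjS, hji⟩, hiD⟩ := hi
          obtain ⟨jk, hjk, rfl⟩ := Finset.mem_image.1 hjS
          exact Finset.mem_biUnion.2 ⟨jk, hjk, by simp [ht, hji, hiD]⟩
        have h3 := hcr S hSne
        have h4 := Finset.le_card_sdiff D
          (Finset.univ.filter fun i : Fin m => ∃ j ∈ S, δ i j = true)
        have h5 := Finset.card_le_card h2
        omega
    obtain ⟨f, hfinj, hft⟩ := (Finset.all_card_le_biUnion_card_iff_exists_injective t).1 hall
    have hfδ : ∀ jk, δ (f jk) jk.1 = true := fun jk => by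
      have := hft jk; rw [ht, Finset.mem_filter] at this; exact this.2.1
    have hfD : ∀ jk, f jk ∉ D := fun jk => by
      have := hft jk; rw [ht, Finset.mem_filter] at this; exact this.2.2
    set g : Fin 2 → Fin r → Fin m := fun b j => f (j, b) with hgdef
    have hginj : ∀ b, Function.Injective (g b) := by
      intro b j k h
      exact (Prod.ext_iff.1 (hfinj h)).1
    have hP : ∀ b, (Xmat δ (g b)).det ≠ 0 := fun b =>
      Xmat_det_ne_zero δ (g b) (hginj b) (fun j => hfδ (j, b))
    refine measure_mono_null (fun x hx => ?_)
      (measure_union_null (mv_null _ (hP 0)) (mv_null _ (hP 1)))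
    by_contra hcon
    simp only [Set.mem_union, Set.mem_setOf_eq, not_or] at hcon
    obtain ⟨h0, h1⟩ := hcon
    apply hx
    have hdet : ∀ b, MvPolynomial.eval x (Xmat δ (g b)).det
        = ((matrixOfPattern δ x).submatrix (g b) id).det := by
      intro b
      rw [RingHom.map_det, RingHom.mapMatrix_apply, Xmat_map]
    refine ⟨Finset.univ.image (g 0), Finset.univ.image (g 1), ?_, ?_, ?_, ?_, ?_⟩
    · rw [Finset.disjoint_left]
      intro a ha hb
      obtain ⟨j, -, rfl⟩ := Finset.mem_image.1 ha
      obtain ⟨k, -, hk⟩ := Finset.mem_image.1 hb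
      have := hfinj hk
      simp [Prod.ext_iff] at this
    · rw [Finset.disjoint_left]
      intro a ha haD
      obtain ⟨j, -, rfl⟩ := Finset.mem_image.1 ha
      exact hfD (j, 0) haD
    · rw [Finset.disjoint_left]
      intro a ha haD
      obtain ⟨j, -, rfl⟩ := Finset.mem_image.1 ha
      exact hfD (j, 1) haD
    · exact rank_aux _ (g 0) _ rfl (by rw [← hdet 0]; exact h0)
    · exact rank_aux _ (g 1) _ rfl (by rw [← hdet 1]; exact h1)
  have hsub : {x : {p : Fin m × Fin r // δ p.1 p.2 = true} → ℝ |
        ¬ RD (matrixOfPattern δ x) s}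
      ⊆ ⋃ D : Finset (Fin m),
        {x : {p : Fin m × Fin r // δ p.1 p.2 = true} → ℝ | D.card = s ∧
          ¬ ∃ A B : Finset (Fin m), Disjoint A B ∧ Disjoint A D ∧ Disjoint B D ∧
            ((matrixOfPattern δ x).submatrix
              (fun i : {i : Fin m // i ∈ A} => (i : Fin m)) id).rank = r ∧
            ((matrixOfPattern δ x).submatrix
              (fun i : {i : Fin m // i ∈ B} => (i : Fin m)) id).rank = r} := by
    intro x hx
    rw [Set.mem_setOf_eq, RD] at hx
    simp only [not_forall, Classical.not_imp] at hx
    obtain ⟨D, hD, hnex⟩ := hx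
    exact Set.mem_iUnion.2 ⟨D, hD, hnex⟩
  refine measure_mono_null hsub (measure_iUnion_null fun D => ?_)
  by_cases hD : D.card = s
  · exact measure_mono_null (fun x hx => hx.2) (key D hD)
  · have : {x : {p : Fin m × Fin r // δ p.1 p.2 = true} → ℝ | D.card = s ∧
        ¬ ∃ A B : Finset (Fin m), Disjoint A B ∧ Disjoint A D ∧ Disjoint B D ∧
          ((matrixOfPattern δ x).submatrix
            (fun i : {i : Fin m // i ∈ A} => (i : Fin m)) id).rank = r ∧
          ((matrixOfPattern δ x).submatrix
            (fun i : {i : Fin m // i ∈ B} => (i : Fin m)) id).rank = r} = ∅ := by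
      ext x; simp [hD]
    rw [this, measure_empty]
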